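/- Let G be an infinite abelian group and A ⊆ G with A ∪ 2A ∼ G and kA ∼ G for some finite k. Then the least such k is at most 5, i.e., 5A ∼ G or some smaller multiple already satisfies this. Consequently X_G(2) ≤ 5. -/

import Mathlib

open Pointwise

/-- `itSum A n` is the `n`-fold sumset of `A` (sums of exactly `n` elements of `A`). -/
def itSum {G : Type*} [AddCommGroup G] (A : Set G) : ℕ → Set G
  | 0 => {0}
  | n + 1 => itSum A n + A

/-- `SimEq A B` means the symmetric difference of `A` and `B` is finite. -/
def SimEq {G : Type*} [AddCommGroup G] (A B : Set G) : Prop :=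
  (symmDiff A B).Finite

section Aux

variable {G : Type*} [AddCommGroup G]

lemma simEq_univ_iff (X : Set G) : SimEq X Set.univ ↔ (Xᶜ).Finite := by
  unfold SimEq
  rw [← Set.top_eq_univ, symmDiff_top, hnot_eq_compl]

lemma itSum_succ (A : Set G) (n : ℕ) : itSum A (n + 1) = itSum A n + A := rfl

lemma itSum_one (A : Set G) : itSum A 1 = A := by
  show itSum A 0 + A = A
  show ({0} : Set G) + A = A
  ext x
  simp [Set.mem_add]

lemma itSum_add (A : Set G) (m n : ℕ) :
    itSum A (m + n) = itSum A m + itSum A n := by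
  induction n with
  | zero =>
    show itSum A m = itSum A m + itSum A 0
    show itSum A m = itSum A m + ({0} : Set G)
    ext x
    simp [Set.mem_add]
  | succ n ih =>
    show itSum A (m + n + 1) = itSum A m + (itSum A n + A)
    rw [itSum_succ, ih, add_assoc]

lemma mem_add_singleton {X : Set G} {t x : G} : x ∈ X + {t} ↔ x - t ∈ X := by
  rw [Set.add_singleton]
  constructor
  · rintro ⟨a, ha, rfl⟩
    simpa using ha
  · intro h
    exact ⟨x - t, h, sub_add_cancel x t⟩

lemma compl_add_singleton (X : Set G) (t : G) : Xᶜ + {t} = (X + {t})ᶜ := by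
  ext x
  simp only [Set.mem_compl_iff, mem_add_singleton]

lemma cofinite_inter [Infinite G] {X Y : Set G}
    (hX : (Xᶜ).Finite) (hY : (Yᶜ).Finite) : (X ∩ Y).Nonempty := by
  by_contra h
  rw [Set.not_nonempty_iff_eq_empty] at h
  have huniv : (Set.univ : Set G) ⊆ Xᶜ ∪ Yᶜ := by
    intro x _
    by_contra hx
    simp only [Set.mem_union, Set.mem_compl_iff, not_or, not_not] at hx
    have : x ∈ X ∩ Y := ⟨hx.1, hx.2⟩
    simp [h] at this
  exact Set.infinite_univ ((hX.union hY).subset huniv)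

lemma itSum_finite {A : Set G} (hA : A.Finite) (n : ℕ) : (itSum A n).Finite := by
  induction n with
  | zero => exact Set.finite_singleton 0
  | succ n ih => exact ih.add hA

lemma A_infinite [Infinite G] {A : Set G} {N : ℕ}
    (hN : ((itSum A N)ᶜ).Finite) : A.Infinite := by
  intro hA
  have h1 : (itSum A N).Finite := itSum_finite hA N
  have huniv : (Set.univ : Set G) ⊆ itSum A N ∪ (itSum A N)ᶜ := by
    intro x _
    by_cases h : x ∈ itSum A N
    · exact Or.inl h
    · exact Or.inr h
  exact Set.infinite_univ ((h1.union hN).subset huniv)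

/-- The mixing lemma: an element in two consecutive sumsets makes the sumset
two steps higher cofinite. -/
lemma mixing {A : Set G} (hcof : (((A ∪ itSum A 2))ᶜ).Finite) {j : ℕ} {t : G}
    (ht1 : t ∈ itSum A j) (ht2 : t ∈ itSum A (j + 1)) :
    ((itSum A (j + 2))ᶜ).Finite := by
  have hsub : (A ∪ itSum A 2) + {t} ⊆ itSum A (j + 2) := by
    intro x hx
    rw [mem_add_singleton] at hx
    rcases hx with hy | hy
    · -- x - t ∈ A, t ∈ (j+1)A : x ∈ (j+2)A = (j+1)A + A
      rw [show j + 2 = (j + 1) + 1 from rfl, itSum_succ]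
      exact ⟨t, ht2, x - t, hy, by show t + (x - t) = x; rw [add_comm]; exact sub_add_cancel x t⟩
    · -- x - t ∈ 2A, t ∈ jA : x ∈ jA + 2A = (j+2)A
      rw [itSum_add A j 2]
      exact ⟨t, ht1, x - t, hy, by show t + (x - t) = x; rw [add_comm]; exact sub_add_cancel x t⟩
  have h1 : ((itSum A (j + 2))ᶜ) ⊆ ((A ∪ itSum A 2) + {t})ᶜ :=
    Set.compl_subset_compl.mpr hsub
  have h2 : (((A ∪ itSum A 2) + {t})ᶜ).Finite := by
    rw [← compl_add_singleton]
    exact hcof.add (Set.finite_singleton t)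
  exact h2.subset h1

/-- The rigid case is impossible: if `A` and `2A` are disjoint and `2A` and `3A`
are disjoint, then no `NA` can be cofinite. -/
lemma rigid [Infinite G] {A : Set G} (hcof : (((A ∪ itSum A 2))ᶜ).Finite)
    (hb : A ∩ itSum A 2 = ∅) (hc : itSum A 2 ∩ itSum A 3 = ∅)
    {N : ℕ} (hN1 : 1 ≤ N) (hN : ((itSum A N)ᶜ).Finite) : False := by
  set E : Set G := (A ∪ itSum A 2)ᶜ with hE_def
  have hAinf : A.Infinite := A_infinite hN
  -- 3A ⊆ A ∪ E
  have h3 : ∀ x ∈ itSum A 3, x ∈ A ∪ E := by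
    intro x hx
    by_cases hxA : x ∈ A
    · exact Or.inl hxA
    by_cases hx2 : x ∈ itSum A 2
    · exact absurd (Set.mem_inter hx2 hx) (by rw [hc]; exact Set.notMem_empty x)
    · exact Or.inr (by simp [hE_def, hxA, hx2])
  -- sums s + a with s ∈ 2A land in A ∪ E
  have key1 : ∀ s ∈ itSum A 2, ∀ a ∈ A, s + a ∈ A ∪ E := by
    intro s hs a ha
    exact h3 (s + a) ⟨s, hs, a, ha, rfl⟩
  -- even levels: u ∈ (2m+2)A pushes A almost into A
  have keyEven : ∀ m : ℕ, ∀ u ∈ itSum A (2 * m + 2),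
      ∃ Y : Set G, Y.Finite ∧ ∀ a ∈ A, u + a ∈ A ∪ Y := by
    intro m
    induction m with
    | zero =>
      intro u hu
      exact ⟨E, hcof, fun a ha => key1 u hu a ha⟩
    | succ m ih =>
      intro u hu
      rw [show 2 * (m + 1) + 2 = (2 * m + 2) + 2 by ring, itSum_add] at hu
      obtain ⟨v, hv, s, hs, rfl⟩ := hu
      obtain ⟨Y, hYfin, hY⟩ := ih v hv
      refine ⟨Y ∪ (fun e => v + e) '' E, hYfin.union (hcof.image _), ?_⟩
      intro a ha
      rw [add_assoc]
      rcases key1 s hs a ha with h | h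
      · rcases hY (s + a) h with h' | h'
        · exact Or.inl h'
        · exact Or.inr (Or.inl h')
      · exact Or.inr (Or.inr ⟨s + a, h, rfl⟩)
  -- odd levels: u ∈ (2m+1)A pushes A almost into 2A
  have keyOdd : ∀ m : ℕ, ∀ u ∈ itSum A (2 * m + 1),
      ∃ Y : Set G, Y.Finite ∧ ∀ a ∈ A, u + a ∈ itSum A 2 ∪ Y := by
    intro m
    induction m with
    | zero =>
      intro u hu
      refine ⟨∅, Set.finite_empty, fun a ha => Or.inl ?_⟩
      rw [show (2 : ℕ) = 1 + 1 from rfl, itSum_succ]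
      exact ⟨u, hu, a, ha, rfl⟩
    | succ m ih =>
      intro u hu
      rw [show 2 * (m + 1) + 1 = (2 * m + 1) + 2 by ring, itSum_add] at hu
      obtain ⟨v, hv, s, hs, rfl⟩ := hu
      obtain ⟨Y, hYfin, hY⟩ := ih v hv
      refine ⟨Y ∪ (fun e => v + e) '' E, hYfin.union (hcof.image _), ?_⟩
      intro a ha
      rw [add_assoc]
      rcases key1 s hs a ha with h | h
      · rcases hY (s + a) h with h' | h'
        · exact Or.inl h'
        · exact Or.inr (Or.inl h')
      · exact Or.inr (Or.inr ⟨s + a, h, rfl⟩)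
  -- (N+1)A is also cofinite
  obtain ⟨a0, ha0⟩ := hAinf.nonempty
  have hN' : ((itSum A (N + 1))ᶜ).Finite := by
    have hsub : itSum A N + {a0} ⊆ itSum A (N + 1) := by
      intro x hx
      rw [mem_add_singleton] at hx
      rw [itSum_succ]
      exact ⟨x - a0, hx, a0, ha0, sub_add_cancel x a0⟩
    have h1 : ((itSum A (N + 1))ᶜ) ⊆ (itSum A N + {a0})ᶜ :=
      Set.compl_subset_compl.mpr hsub
    have h2 : ((itSum A N + {a0})ᶜ).Finite := by
      rw [← compl_add_singleton]
      exact hN.add (Set.finite_singleton a0)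
    exact h2.subset h1
  -- pick an even and an odd cofinite level among N, N+1
  obtain ⟨m, hm⟩ : ∃ m, N = 2 * m + 1 ∨ N = 2 * m + 2 := ⟨(N - 1) / 2, by omega⟩
  have hEvOd : ∃ me mo : ℕ, ((itSum A (2 * me + 2))ᶜ).Finite ∧
      ((itSum A (2 * mo + 1))ᶜ).Finite := by
    rcases hm with hm | hm
    · exact ⟨m, m, by rw [show 2 * m + 2 = N + 1 by omega]; exact hN',
        by rw [← hm]; exact hN⟩
    · exact ⟨m, m + 1, by rw [← hm]; exact hN,
        by rw [show 2 * (m + 1) + 1 = N + 1 by omega]; exact hN'⟩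
  obtain ⟨me, mo, hEv, hOd⟩ := hEvOd
  obtain ⟨u, hu1, hu2⟩ := cofinite_inter hEv hOd
  obtain ⟨Y1, hY1fin, hY1⟩ := keyEven me u hu1
  obtain ⟨Y2, hY2fin, hY2⟩ := keyOdd mo u hu2
  -- u + A lands in the finite set Y1 ∪ Y2
  have himg : (fun a => u + a) '' A ⊆ Y1 ∪ Y2 := by
    rintro _ ⟨a, ha, rfl⟩
    rcases hY1 a ha with h1 | h1
    · rcases hY2 a ha with h2 | h2
      · exact absurd (Set.mem_inter h1 h2) (by rw [hb]; exact Set.notMem_empty _)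
      · exact Or.inr h2
    · exact Or.inl h1
  have hinj : Set.InjOn (fun a => u + a) A := fun x _ y _ h => by
    simpa using h
  exact Set.not_infinite.mpr ((hY1fin.union hY2fin).subset himg) (hAinf.image hinj)

end Aux

theorem stmt_18 {G : Type*} [AddCommGroup G] [Infinite G] (A : Set G)
    (hA : SimEq (itSum A 1 ∪ itSum A 2) Set.univ)
    (hbasis : ∃ k, 1 ≤ k ∧ SimEq (itSum A k) Set.univ) :
    ∃ k, 1 ≤ k ∧ k ≤ 5 ∧ SimEq (itSum A k) Set.univ := by
  rw [simEq_univ_iff, itSum_one] at hA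
  obtain ⟨N, hN1, hN⟩ := hbasis
  rw [simEq_univ_iff] at hN
  by_cases h1 : (A ∩ itSum A 2).Nonempty
  · obtain ⟨t, ht1, ht2⟩ := h1
    refine ⟨3, by norm_num, by norm_num, ?_⟩
    rw [simEq_univ_iff]
    have := mixing hA (j := 1) (t := t) (by rw [itSum_one]; exact ht1) ht2
    exact this
  by_cases h2 : (itSum A 2 ∩ itSum A 3).Nonempty
  · obtain ⟨t, ht1, ht2⟩ := h2
    refine ⟨4, by norm_num, by norm_num, ?_⟩
    rw [simEq_univ_iff]
    have := mixing hA (j := 2) (t := t) ht1 ht2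
    exact this
  · exact absurd (rigid hA (Set.not_nonempty_iff_eq_empty.mp h1)
      (Set.not_nonempty_iff_eq_empty.mp h2) hN1 hN) (fun h => h)
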